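/- Let n ≥ 2, let L be a real n×n matrix with L 1_n = 0_n, and let Q be as in the context. Then the characteristic polynomials satisfy det(s I_n − L) = s · det(s I_{n−1} − Q L Qᵀ) for all s; in other words, the spectrum of L̄ = Q L Qᵀ (with multiplicity) equals the spectrum of L with one copy of the eigenvalue 0 (the one corresponding to the eigenvector 1_n) removed. -/

import Mathlib

open Matrix

/-- For `n ≥ 2`, `L` real `n×n` with `L 1ₙ = 0` and `Q` as in the context,
the characteristic polynomials satisfy `det(s Iₙ − L) = s · det(s Iₙ₋₁ − Q L Qᵀ)` for
all `s`: the spectrum of `L̄ = Q L Qᵀ` (with multiplicity) is that of `L` with one copy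
of the eigenvalue `0` (corresponding to `1ₙ`) removed. -/
theorem stmt_1 (n : ℕ) (hn : 2 ≤ n)
    (L : Matrix (Fin n) (Fin n) ℝ)
    (hL : L.mulVec (fun _ => (1 : ℝ)) = 0)
    (Q : Matrix (Fin (n - 1)) (Fin n) ℝ)
    (hQ1 : Q.mulVec (fun _ => (1 : ℝ)) = 0)
    (hQQt : Q * Qᵀ = 1)
    (hQtQ : Qᵀ * Q = 1 - (n : ℝ)⁻¹ • Matrix.of (fun _ _ => (1 : ℝ))) :
    ∀ s : ℝ,
      (s • (1 : Matrix (Fin n) (Fin n) ℝ) - L).det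
        = s * (s • (1 : Matrix (Fin (n - 1)) (Fin (n - 1)) ℝ) - Q * L * Qᵀ).det := by
  intro s
  obtain ⟨m, rfl⟩ : ∃ m, n = m + 1 := ⟨n - 1, by omega⟩
  set c : ℝ := (Real.sqrt (m + 1))⁻¹ with hc
  have hnpos : (0:ℝ) < (m:ℝ) + 1 := by positivity
  have hcsq : c * c = ((m:ℝ) + 1)⁻¹ := by
    rw [hc, ← mul_inv, Real.mul_self_sqrt hnpos.le]
  -- the orthogonal matrix U
  set U : Matrix (Fin (m + 1)) (Fin (m + 1)) ℝ :=
    Matrix.of (fun i j => Fin.cases c (fun k => Q k j) i) with hU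
  have hU0 : ∀ j, U 0 j = c := fun j => rfl
  have hUs : ∀ (k : Fin m) j, U k.succ j = Q k j := fun k j => rfl
  have hQrow : ∀ k, (∑ j, Q k j) = 0 := by
    intro k
    have := congrFun hQ1 k
    simpa [Matrix.mulVec, dotProduct] using this
  have hLrow : ∀ k, (∑ j, L k j) = 0 := by
    intro k
    have := congrFun hL k
    simpa [Matrix.mulVec, dotProduct] using this
  have hUUt : U * Uᵀ = 1 := by
    ext i j
    rw [Matrix.mul_apply]
    induction i using Fin.cases with
    | zero =>
      induction j using Fin.cases with
      | zero =>
        simp only [transpose_apply, hU0, Finset.sum_const, Finset.card_univ,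
          Fintype.card_fin, nsmul_eq_mul, hcsq, Matrix.one_apply_eq]
        field_simp
        exact Nat.cast_succ m
      | succ j =>
        simp only [transpose_apply, hU0, hUs, ← Finset.mul_sum, hQrow, mul_zero]
        rw [Matrix.one_apply_ne (by simp [Fin.ext_iff])]
    | succ i =>
      induction j using Fin.cases with
      | zero =>
        simp only [transpose_apply, hU0, hUs, ← Finset.sum_mul, hQrow, zero_mul]
        rw [Matrix.one_apply_ne (by simp [Fin.ext_iff])]
      | succ j =>
        have : (∑ k, Q i k * Q j k) = (Q * Qᵀ) i j := by
          simp [Matrix.mul_apply]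
        simp only [transpose_apply, hUs, this, hQQt]
        by_cases h : i = j
        · subst h; simp
        · rw [Matrix.one_apply_ne h, Matrix.one_apply_ne (by simpa [Fin.succ_inj] using h)]
  have hdetU : U.det * U.det = 1 := by
    have := congrArg Matrix.det hUUt
    rwa [Matrix.det_mul, Matrix.det_transpose, Matrix.det_one] at this
  set M : Matrix (Fin (m + 1)) (Fin (m + 1)) ℝ := s • 1 - L with hM
  have key : M.det = (U * M * Uᵀ).det := by
    rw [Matrix.det_mul, Matrix.det_mul, Matrix.det_transpose]
    linear_combination (-M.det) * hdetU
  have hconj : U * M * Uᵀ = s • 1 - U * L * Uᵀ := by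
    rw [hM, Matrix.mul_sub, Matrix.sub_mul, Matrix.mul_smul, Matrix.mul_one,
      Matrix.smul_mul, hUUt]
  -- first column of U*L*Uᵀ vanishes
  have hcol : ∀ i, (U * L * Uᵀ) i 0 = 0 := by
    intro i
    rw [Matrix.mul_apply]
    simp only [transpose_apply, hU0]
    rw [← Finset.sum_mul]
    have : (∑ k, (U * L) i k) = 0 := by
      simp only [Matrix.mul_apply]
      rw [Finset.sum_comm]
      simp [← Finset.mul_sum, hLrow]
    rw [this, zero_mul]
  set A : Matrix (Fin (m + 1)) (Fin (m + 1)) ℝ := s • 1 - U * L * Uᵀ with hA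
  have hA0 : ∀ i : Fin (m + 1), A i 0 = if i = 0 then s else 0 := by
    intro i
    rw [hA]
    simp only [Matrix.sub_apply, Matrix.smul_apply, hcol, sub_zero, Matrix.one_apply,
      smul_eq_mul]
    split <;> simp
  have hdetA : A.det = s * (A.submatrix Fin.succ Fin.succ).det := by
    rw [Matrix.det_succ_column_zero]
    rw [Finset.sum_eq_single 0]
    · simp [hA0, Fin.succAbove_zero]
    · intro i _ hi
      rw [hA0, if_neg hi]; ring
    · intro h; exact absurd (Finset.mem_univ _) h
  have hdetA' : A.det = s * ((A.submatrix (Fin.succ : Fin (m+1-1) → Fin (m+1))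
      (Fin.succ : Fin (m+1-1) → Fin (m+1))).det) := hdetA
  have hsub : A.submatrix (Fin.succ : Fin (m+1-1) → Fin (m+1))
        (Fin.succ : Fin (m+1-1) → Fin (m+1))
      = s • (1 : Matrix (Fin (m+1-1)) (Fin (m+1-1)) ℝ) - Q * L * Qᵀ := by
    ext i j
    simp only [Matrix.submatrix_apply, hA, Matrix.sub_apply, Matrix.smul_apply,
      smul_eq_mul]
    have h1 : (1 : Matrix (Fin (m+1)) (Fin (m+1)) ℝ) i.succ j.succ
        = (1 : Matrix (Fin (m+1-1)) (Fin (m+1-1)) ℝ) i j := by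
      rw [Matrix.one_apply, Matrix.one_apply]
      simp [Fin.succ_inj]
    have h2 : (U * L * Uᵀ) i.succ j.succ = (Q * L * Qᵀ) i j := by
      rw [Matrix.mul_apply, Matrix.mul_apply]
      refine Finset.sum_congr rfl fun k _ => ?_
      rw [transpose_apply, transpose_apply, hUs, Matrix.mul_apply, Matrix.mul_apply]
      refine congrArg (· * Q j k) (Finset.sum_congr rfl fun l _ => ?_)
      rw [hUs]
    rw [h1, h2]
  rw [key, hconj, hdetA', hsub]
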